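/- Let f : [0,∞) → [0,∞) be continuous with f(0) = 0, and suppose that t ↦ f(t)/t^{2n−1} is (strictly) increasing on (0,∞), where n ≥ 1. Let F(t) = ∫₀ᵗ f(s) ds. Then the function t ↦ t f(t) − 2n F(t) is increasing on [0,∞); in particular t f(t) − 2n F(t) ≥ 0 for all t ≥ 0. -/

import Mathlib

theorem stmt3 (n : ℕ) (hn : 1 ≤ n) (f : ℝ → ℝ)
    (hf_cont : Continuous f) (hf0 : f 0 = 0)
    (hf_nonneg : ∀ t ≥ (0:ℝ), 0 ≤ f t)
    (hmono : StrictMonoOn (fun t => f t / t ^ (2 * n - 1)) (Set.Ioi 0))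
    (F : ℝ → ℝ) (hF : ∀ t, F t = ∫ s in (0:ℝ)..t, f s) :
    StrictMonoOn (fun t => t * f t - 2 * n * F t) (Set.Ici 0) ∧
      ∀ t ≥ (0:ℝ), 0 ≤ t * f t - 2 * n * F t := by
  have hp1 : 2 * n - 1 + 1 = 2 * n := by omega
  have hSM : StrictMonoOn (fun t => t * f t - 2 * n * F t) (Set.Ici 0) := by
    intro a ha b hb hab
    simp only [Set.mem_Ici] at ha hb
    have hbpos : 0 < b := lt_of_le_of_lt ha hab
    set C := f b / b ^ (2 * n - 1) with hC
    have hbp : (0:ℝ) < b ^ (2 * n - 1) := pow_pos hbpos _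
    -- pointwise strict inequality on Ioo a b
    have hpt : ∀ s ∈ Set.Ioo a b, 0 < C * s ^ (2 * n - 1) - f s := by
      intro s hs
      have hspos : 0 < s := lt_of_le_of_lt ha hs.1
      have := hmono (Set.mem_Ioi.mpr hspos) (Set.mem_Ioi.mpr hbpos) hs.2
      have hsp : (0:ℝ) < s ^ (2 * n - 1) := pow_pos hspos _
      have : f s / s ^ (2 * n - 1) < C := this
      have := (div_lt_iff₀ hsp).mp this
      linarith
    have hintg : IntervalIntegrable (fun s => C * s ^ (2 * n - 1) - f s)
        MeasureTheory.volume a b :=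
      (Continuous.intervalIntegrable (by continuity) a b)
    have hpos := intervalIntegral.intervalIntegral_pos_of_pos_on hintg hpt hab
    have hfint : ∀ u v : ℝ, IntervalIntegrable f MeasureTheory.volume u v :=
      fun u v => hf_cont.intervalIntegrable u v
    have hsplit : (∫ s in a..b, (C * s ^ (2 * n - 1) - f s))
        = C * ((b ^ (2 * n) - a ^ (2 * n)) / (2 * n)) - ∫ s in a..b, f s := by
      rw [intervalIntegral.integral_sub
        ((Continuous.intervalIntegrable (by continuity) a b)) (hfint a b),
        intervalIntegral.integral_const_mul, integral_pow]
      have hcast : ((2 * n - 1 : ℕ) : ℝ) + 1 = 2 * (n : ℝ) := by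
        exact_mod_cast congrArg (Nat.cast : ℕ → ℝ) hp1
      rw [hp1, hcast]
    have hFab : F b - F a = ∫ s in a..b, f s := by
      rw [hF, hF]
      rw [← intervalIntegral.integral_add_adjacent_intervals (hfint 0 a) (hfint a b)]
      ring
    -- C * a^(2n) ≥ a * f a
    have hCa : a * f a ≤ C * a ^ (2 * n) := by
      rcases eq_or_lt_of_le ha with h0 | hapos
      · rw [← h0]
        simp [hn, Nat.mul_pos, zero_pow (by omega : 2 * n ≠ 0)]
      · have hle : f a / a ^ (2 * n - 1) ≤ C :=
          (hmono (Set.mem_Ioi.mpr hapos) (Set.mem_Ioi.mpr hbpos) hab).le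
        have hap : (0:ℝ) < a ^ (2 * n - 1) := pow_pos hapos _
        have h1 : f a ≤ C * a ^ (2 * n - 1) := by
          have := (div_le_iff₀ hap).mp hle
          linarith
        have h2 : a ^ (2 * n) = a ^ (2 * n - 1) * a := by
          rw [← pow_succ, hp1]
        calc a * f a ≤ a * (C * a ^ (2 * n - 1)) :=
              mul_le_mul_of_nonneg_left h1 ha
            _ = C * a ^ (2 * n) := by rw [h2]; ring
    -- C * b^(2n) = b * f b
    have hCb : C * b ^ (2 * n) = b * f b := by
      have h2 : b ^ (2 * n) = b ^ (2 * n - 1) * b := by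
        rw [← pow_succ, hp1]
      rw [h2, hC, div_mul_eq_mul_div, div_eq_iff (ne_of_gt hbp)]
      ring
    have hnpos : (0:ℝ) < 2 * n := by positivity
    rw [hsplit] at hpos
    simp only
    have hkey : (2 * n : ℝ) * (F b - F a) < C * (b ^ (2 * n) - a ^ (2 * n)) := by
      rw [hFab]
      have h := mul_lt_mul_of_pos_left hpos hnpos
      have hdiv : 2 * (n:ℝ) * (C * ((b ^ (2*n) - a ^ (2*n)) / (2 * n)))
          = C * (b ^ (2*n) - a ^ (2*n)) := by field_simp
      nlinarith [h, hdiv]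
    nlinarith [hkey, hCa, hCb]
  refine ⟨hSM, fun t ht => ?_⟩
  have hF0 : F 0 = 0 := by simp [hF]
  rcases eq_or_lt_of_le ht with h0 | htpos
  · rw [← h0]; simp [hf0, hF0]
  · have := hSM (Set.self_mem_Ici) (Set.mem_Ici.mpr ht) htpos
    simp only [hF0, hf0, mul_zero, zero_mul, sub_zero] at this
    linarith [this]
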